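/- Let M be a finite set of items with nonnegative values v : M → ℝ, let μ be the two-agent maximin share of v, and let ε > 0. Then the number of items whose value strictly exceeds εμ/4 is at most ⌈8/ε⌉, i.e., |{j ∈ M : v(j) > εμ/4}| ≤ ⌈8/ε⌉. -/

import Mathlib

/-- The two-agent maximin share of a valuation `v` on a finite set `M` of items:
the maximum over all partitions of `M` into two bundles of the smaller bundle's value. -/
noncomputable def mms2 {ι : Type*} [DecidableEq ι] (M : Finset ι) (v : ι → ℝ) : ℝ :=
  M.powerset.sup' ⟨∅, Finset.empty_mem_powerset M⟩
    (fun S => min (∑ j ∈ S, v j) (∑ j ∈ M \ S, v j))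

/-- The number of items whose value strictly exceeds `εμ/4` is at most `⌈8/ε⌉`,
where `μ` is the two-agent maximin share. -/
theorem few_large_items
    {ι : Type*} [DecidableEq ι]
    (M : Finset ι) (v : ι → ℝ) (hv : ∀ j, 0 ≤ v j)
    (μ : ℝ) (hμ : μ = mms2 M v)
    (ε : ℝ) (hε : 0 < ε) :
    (M.filter (fun j => ε * μ / 4 < v j)).card ≤ ⌈(8 : ℝ) / ε⌉₊ := by
  by_contra hcon
  push_neg at hcon
  set L := M.filter (fun j => ε * μ / 4 < v j) with hLdef
  set n := ⌈(8 : ℝ) / ε⌉₊ with hndef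
  have hn1 : 1 ≤ n := Nat.one_le_ceil_iff.mpr (by positivity)
  have hk : n + 1 ≤ L.card := hcon
  have hLM : L ⊆ M := Finset.filter_subset _ _
  have hbig : ∀ j ∈ L, ε * μ / 4 < v j := fun j hj => (Finset.mem_filter.mp hj).2
  -- μ is nonnegative
  have hμ0 : 0 ≤ μ := by
    rw [hμ, mms2]
    refine le_trans ?_ (Finset.le_sup'
      (fun S => min (∑ j ∈ S, v j) (∑ j ∈ M \ S, v j)) (Finset.empty_mem_powerset M))
    have : (0:ℝ) ≤ ∑ j ∈ M \ ∅, v j := Finset.sum_nonneg fun j _ => hv j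
    simp only [Finset.sum_empty, min_le_iff]
    simp [Finset.sum_nonneg fun j (_ : j ∈ M) => hv j]
  have ht0 : 0 ≤ ε * μ / 4 := by positivity
  -- choose a half of L
  obtain ⟨S₁, hS₁L, hS₁card⟩ :=
    Finset.exists_subset_card_eq (Nat.div_le_self L.card 2)
  have hS₁ne : S₁.Nonempty := by
    rw [← Finset.card_pos, hS₁card]; omega
  -- the key cardinality bound : 4/ε ≤ |S₁|
  have hceil : ((8:ℝ)/ε) ≤ n := Nat.le_ceil _
  have hhalfN : L.card ≤ 2 * (L.card / 2) + 1 := by omega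
  have hhalf : (4:ℝ)/ε ≤ (S₁.card : ℝ) := by
    rw [hS₁card]
    have h1 : (L.card : ℝ) ≤ 2 * ((L.card / 2 : ℕ) : ℝ) + 1 := by exact_mod_cast hhalfN
    have h2 : (n : ℝ) + 1 ≤ (L.card : ℝ) := by exact_mod_cast hk
    have h8 : (8:ℝ)/ε = 2 * ((4:ℝ)/ε) := by ring
    linarith
  have hμle : μ ≤ (S₁.card : ℝ) * (ε * μ / 4) := by
    have : (4:ℝ)/ε * (ε * μ / 4) = μ := by field_simp
    nlinarith [mul_le_mul_of_nonneg_right hhalf ht0]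
  -- first bundle exceeds μ
  have hsum1 : μ < ∑ j ∈ S₁, v j := by
    have := Finset.sum_lt_sum_of_nonempty hS₁ne (fun j hj => hbig j (hS₁L hj))
    rw [Finset.sum_const, nsmul_eq_mul] at this
    linarith
  -- second bundle exceeds μ
  have hS₂sub : L \ S₁ ⊆ M \ S₁ := Finset.sdiff_subset_sdiff hLM (le_refl _)
  have hS₂card : S₁.card ≤ (L \ S₁).card := by
    rw [Finset.card_sdiff_of_subset hS₁L, hS₁card]; omega
  have hS₂ne : (L \ S₁).Nonempty := by
    rw [← Finset.card_pos]
    have := hS₁ne.card_pos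
    omega
  have hsum2 : μ < ∑ j ∈ M \ S₁, v j := by
    have hle : ∑ j ∈ L \ S₁, v j ≤ ∑ j ∈ M \ S₁, v j :=
      Finset.sum_le_sum_of_subset_of_nonneg hS₂sub (fun j _ _ => hv j)
    have hlt := Finset.sum_lt_sum_of_nonempty hS₂ne
      (fun j hj => hbig j (Finset.sdiff_subset hj))
    rw [Finset.sum_const, nsmul_eq_mul] at hlt
    have hcard : ((S₁.card : ℝ)) * (ε * μ / 4) ≤ ((L \ S₁).card : ℝ) * (ε * μ / 4) := by
      have : ((S₁.card : ℝ)) ≤ ((L \ S₁).card : ℝ) := by exact_mod_cast hS₂card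
      exact mul_le_mul_of_nonneg_right this ht0
    linarith
  -- contradiction with the definition of mms2
  have hle : min (∑ j ∈ S₁, v j) (∑ j ∈ M \ S₁, v j) ≤ μ := by
    rw [hμ, mms2]
    exact Finset.le_sup' (fun S => min (∑ j ∈ S, v j) (∑ j ∈ M \ S, v j)) (Finset.mem_powerset.mpr (hS₁L.trans hLM))
  have : μ < min (∑ j ∈ S₁, v j) (∑ j ∈ M \ S₁, v j) := lt_min hsum1 hsum2
  linarith
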